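/- Let S, T ∈ ℕ. For each i ∈ {1,…,T}, let C_i : ℂ^{2^S×2^S} → ℂ^{2^S×2^S} be an arbitrary linear map, and let q_i ∈ {1,…,S} be a qubit index. For a qubit index q, let M_q denote the measurement operator on qubit q (the linear map that zeroes out all matrix entries whose row and column basis strings differ in coordinate q), and for b ∈ {0,1} let V_{q,b} be the linear map with V_{q,0}(ρ) := ρ and V_{q,1}(ρ) := R_q ρ R_qᴴ, where R_q is the reflection 2|1⟩⟨1| − I₂ applied to qubit q (tensored with the identity on the remaining qubits). Then for every matrix ρ ∈ ℂ^{2^S×2^S}: (C_T ∘ M_{q_T} ∘ C_{T−1} ∘ M_{q_{T−1}} ∘ ⋯ ∘ C_1 ∘ M_{q_1})(ρ) = 2^{−T} · Σ_{r∈{0,1}^T} (C_T ∘ V_{q_T,r_T} ∘ ⋯ ∘ C_1 ∘ V_{q_1,r_1})(ρ). (In words: a computation with T intermediate measurements equals the average, over T uniformly random bits, of the computation in which each measurement is replaced by a randomly applied reflection.) -/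

import Mathlib

open Matrix Kronecker
open scoped ComplexOrder

/-- Bit strings of length `n`. -/
abbrev BS (n : ℕ) : Type := Fin n → Bool

/-- The measurement operator on qubit `q`: zeroes out all entries whose row and column
basis strings differ in coordinate `q`. -/
def measOp (S : ℕ) (q : Fin S) (ρ : Matrix (BS S) (BS S) ℂ) : Matrix (BS S) (BS S) ℂ :=
  Matrix.of fun x y => if x q = y q then ρ x y else 0

/-- The reflection `2|1⟩⟨1| − I₂` applied to qubit `q` (tensored with the identity on the
remaining qubits). -/
noncomputable def reflMat (S : ℕ) (q : Fin S) : Matrix (BS S) (BS S) ℂ :=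
  Matrix.diagonal fun x => if x q then 1 else -1

/-- `V_{q,0}(ρ) = ρ` and `V_{q,1}(ρ) = R_q ρ R_qᴴ`. -/
noncomputable def reflOp (S : ℕ) (q : Fin S) (b : Bool) (ρ : Matrix (BS S) (BS S) ℂ) :
    Matrix (BS S) (BS S) ℂ :=
  if b then reflMat S q * ρ * (reflMat S q)ᴴ else ρ

lemma measOp_avg (S : ℕ) (q : Fin S) (ρ : Matrix (BS S) (BS S) ℂ) :
    measOp S q ρ = (2:ℂ)⁻¹ • (reflOp S q false ρ + reflOp S q true ρ) := by
  ext x y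
  simp only [measOp, reflOp, reflMat, Matrix.of_apply, if_true, if_false,
    Matrix.diagonal_conjTranspose, Matrix.diagonal_mul, Matrix.mul_diagonal,
    Matrix.smul_apply, Matrix.add_apply, Bool.false_eq_true]
  rcases hx : x q <;> rcases hy : y q <;> simp [hx, hy] <;> ring

noncomputable def measLin (S : ℕ) (q : Fin S) :
    Matrix (BS S) (BS S) ℂ →ₗ[ℂ] Matrix (BS S) (BS S) ℂ where
  toFun := measOp S q
  map_add' a b := by ext x y; simp only [measOp, Matrix.of_apply, Matrix.add_apply]; split <;> simp
  map_smul' c a := by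
    ext x y
    simp only [measOp, Matrix.of_apply, Matrix.smul_apply, RingHom.id_apply]
    split <;> simp

lemma foldl_comp_apply {M : Type*} [AddCommMonoid M] [Module ℂ M] (T : ℕ)
    (g : Fin T → (M →ₗ[ℂ] M)) (L0 : M →ₗ[ℂ] M) (x : M) :
    (Fin.foldl T (fun L i => (g i).comp L) L0) x = Fin.foldl T (fun τ i => g i τ) (L0 x) := by
  induction T generalizing L0 with
  | zero => simp
  | succ n ih =>
    rw [Fin.foldl_succ, Fin.foldl_succ, ih]
    rfl

/-- A computation with `T` intermediate measurements equals the average,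
over `T` uniformly random bits, of the computation in which each measurement is replaced by
a randomly applied reflection:
`(C_T ∘ M_{q_T} ∘ ⋯ ∘ C_1 ∘ M_{q_1})(ρ) = 2^{−T} Σ_{r∈{0,1}^T} (C_T ∘ V_{q_T,r_T} ∘ ⋯ ∘ C_1 ∘ V_{q_1,r_1})(ρ)`. -/
theorem measurements_eq_average_over_random_reflections
    (S T : ℕ)
    (C : Fin T → (Matrix (BS S) (BS S) ℂ →ₗ[ℂ] Matrix (BS S) (BS S) ℂ))
    (q : Fin T → Fin S) (ρ : Matrix (BS S) (BS S) ℂ) :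
    Fin.foldl T (fun τ i => C i (measOp S (q i) τ)) ρ =
      ((2 : ℂ) ^ T)⁻¹ •
        ∑ r : Fin T → Bool, Fin.foldl T (fun τ i => C i (reflOp S (q i) (r i) τ)) ρ := by
  induction T generalizing ρ with
  | zero => simp
  | succ n ih =>
    rw [Fin.foldl_succ]
    -- split the initial measurement
    have h0 : C 0 (measOp S (q 0) ρ) =
        (2:ℂ)⁻¹ • (C 0 (reflOp S (q 0) false ρ) + C 0 (reflOp S (q 0) true ρ)) := by
      rw [measOp_avg, LinearMap.map_smul, map_add]
    -- linearity of the tail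
    set g : Fin n → (Matrix (BS S) (BS S) ℂ →ₗ[ℂ] Matrix (BS S) (BS S) ℂ) :=
      fun i => (C i.succ).comp (measLin S (q i.succ)) with hg
    have hfold : ∀ x, Fin.foldl n (fun τ i => C i.succ (measOp S (q i.succ) τ)) x
        = (Fin.foldl n (fun L i => (g i).comp L) LinearMap.id) x := by
      intro x
      rw [foldl_comp_apply]
      rfl
    have key : Fin.foldl n (fun τ i => C i.succ (measOp S (q i.succ) τ))
          (C 0 (measOp S (q 0) ρ))
        = (2:ℂ)⁻¹ • (Fin.foldl n (fun τ i => C i.succ (measOp S (q i.succ) τ))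
              (C 0 (reflOp S (q 0) false ρ))
            + Fin.foldl n (fun τ i => C i.succ (measOp S (q i.succ) τ))
              (C 0 (reflOp S (q 0) true ρ))) := by
      rw [hfold, hfold, hfold, h0, LinearMap.map_smul, map_add]
    rw [key, ih (fun i => C i.succ) (fun i => q i.succ), ih (fun i => C i.succ) (fun i => q i.succ)]
    -- now the RHS: split the sum over r
    have hsum : ∑ r : Fin (n+1) → Bool,
        Fin.foldl (n+1) (fun τ i => C i (reflOp S (q i) (r i) τ)) ρ
        = ∑ b : Bool, ∑ r : Fin n → Bool,
          Fin.foldl n (fun τ i => C i.succ (reflOp S (q i.succ) (r i) τ))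
            (C 0 (reflOp S (q 0) b ρ)) := by
      rw [← (Fin.consEquiv (fun _ : Fin (n+1) => Bool)).sum_comp, Fintype.sum_prod_type]
      refine Finset.sum_congr rfl fun b _ => Finset.sum_congr rfl fun r _ => ?_
      rw [Fin.foldl_succ]
      simp [Fin.consEquiv]
    rw [hsum]
    simp only [Fintype.sum_bool]
    have hc : (2:ℂ)⁻¹ * ((2:ℂ)^n)⁻¹ = ((2:ℂ)^(n+1))⁻¹ := by
      rw [pow_succ, mul_inv, mul_comm]
    rw [smul_add, smul_smul, smul_smul, hc, ← smul_add, add_comm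
      (∑ r : Fin n → Bool, Fin.foldl n (fun τ i => (C i.succ) (reflOp S (q i.succ) (r i) τ)) ((C 0) (reflOp S (q 0) false ρ)))]
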